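/- Let dμ and dν be bounded ℝ^k-valued measures on a measurable space X with dμ_ε := dμ + ε dν, decompositions dμ_ε = N_ε |dμ_ε|, dν = A_ε |dμ_ε| + dν_s^ε (dν_s^ε ⊥ |dμ_ε|), and F(ε) := ∫_X |dμ_ε|. Suppose |A_{ε₁}|² ∈ L¹(X, |dμ_{ε₁}|), where ε₁ ∈ ℝ is arbitrary. Then lim_{ε₂→ε₁+} (F'_±(ε₂) − F'_+(ε₁))/(ε₂ − ε₁) = lim_{ε₂→ε₁−} (F'_±(ε₂) − F'_−(ε₁))/(ε₂ − ε₁) = ∫_X ( |A_{ε₁}|² − |A_{ε₁}·N_{ε₁}|² ) |dμ_{ε₁}| (all four limits exist, have this common value, and the value is ≥ 0). -/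

import Mathlib

open MeasureTheory Filter Set Topology
open scoped ENNReal NNReal InnerProductSpace Classical

lemma tv_eq {X : Type*} [MeasurableSpace X] {E : Type*} [NormedAddCommGroup E] [NormedSpace ℝ E] [CompleteSpace E]
    (ρ₁ ρ₂ : Measure X) [IsFiniteMeasure ρ₁] [IsFiniteMeasure ρ₂]
    (f g : X → E) (hf : Integrable f ρ₁) (hg : Integrable g ρ₂)
    (hf1 : ∀ᵐ x ∂ρ₁, ‖f x‖ = 1)
    (heq : ∀ S, MeasurableSet S → ∫ x in S, f x ∂ρ₁ = ∫ x in S, g x ∂ρ₂) :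
    (ρ₁ Set.univ).toReal = ∫ x, ‖g x‖ ∂ρ₂ := by
  set ρ : Measure X := ρ₁ + ρ₂ with hρ
  have h1 : ρ₁ ≪ ρ := Measure.absolutelyContinuous_of_le (Measure.le_add_right le_rfl)
  have h2 : ρ₂ ≪ ρ := Measure.absolutelyContinuous_of_le (Measure.le_add_left le_rfl)
  set d₁ : X → ℝ≥0∞ := ρ₁.rnDeriv ρ with hd₁
  set d₂ : X → ℝ≥0∞ := ρ₂.rnDeriv ρ with hd₂
  set F₁ : X → E := fun x => (d₁ x).toReal • f x with hF₁
  set F₂ : X → E := fun x => (d₂ x).toReal • g x with hF₂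
  have hint1 : Integrable F₁ ρ := (integrable_rnDeriv_smul_iff h1).mpr hf
  have hint2 : Integrable F₂ ρ := (integrable_rnDeriv_smul_iff h2).mpr hg
  have hFeq : F₁ =ᵐ[ρ] F₂ := by
    refine ae_eq_of_forall_setIntegral_eq_of_sigmaFinite
      (fun s hs _ => hint1.integrableOn) (fun s hs _ => hint2.integrableOn) ?_
    intro s hs _
    rw [setIntegral_rnDeriv_smul h1 hs, setIntegral_rnDeriv_smul h2 hs]
    exact heq s hs
  have hnorm2 : ∫ x, ‖g x‖ ∂ρ₂ = ∫ x, ‖F₂ x‖ ∂ρ := by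
    rw [← integral_rnDeriv_smul h2 (f := fun x => ‖g x‖)]
    refine integral_congr_ae (Eventually.of_forall fun x => ?_)
    simp [hF₂, hd₂, norm_smul, Real.norm_of_nonneg ENNReal.toReal_nonneg, smul_eq_mul]
  have hnorm12 : ∫ x, ‖F₂ x‖ ∂ρ = ∫ x, ‖F₁ x‖ ∂ρ :=
    integral_congr_ae ((hFeq.fun_comp norm).symm)
  have hf1' : ∀ᵐ x ∂ρ, d₁ x ≠ 0 → ‖f x‖ = 1 := by
    have := hf1
    rwa [← Measure.withDensity_rnDeriv_eq ρ₁ ρ h1,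
      ae_withDensity_iff (Measure.measurable_rnDeriv ρ₁ ρ)] at this
  have hnorm1 : ∫ x, ‖F₁ x‖ ∂ρ = ∫ x, (d₁ x).toReal ∂ρ := by
    refine integral_congr_ae (hf1'.mono fun x hx => ?_)
    by_cases h0 : d₁ x = 0
    · simp [hF₁, h0]
    · simp [hF₁, norm_smul, Real.norm_of_nonneg ENNReal.toReal_nonneg, hx h0]
  rw [hnorm2, hnorm12, hnorm1, Measure.integral_toReal_rnDeriv h1]
  rfl

section Dlemmas
variable {E : Type*} [NormedAddCommGroup E] [InnerProductSpace ℝ E]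

noncomputable def Dp (n a : E) (t : ℝ) : ℝ :=
  if n + t • a = 0 then ‖a‖ else (⟪n, a⟫_ℝ + t * ‖a‖ ^ 2) / ‖n + t • a‖

noncomputable def Dm (n a : E) (t : ℝ) : ℝ :=
  if n + t • a = 0 then -‖a‖ else (⟪n, a⟫_ℝ + t * ‖a‖ ^ 2) / ‖n + t • a‖

lemma inner_nta (n a : E) (t : ℝ) : ⟪n + t • a, a⟫_ℝ = ⟪n, a⟫_ℝ + t * ‖a‖ ^ 2 := by
  rw [inner_add_left, real_inner_smul_left, real_inner_self_eq_norm_sq]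

lemma norm_nta_sq (n a : E) (u : ℝ) :
    ‖n + u • a‖ ^ 2 = ‖n‖ ^ 2 + 2 * u * ⟪n, a⟫_ℝ + u ^ 2 * ‖a‖ ^ 2 := by
  rw [← real_inner_self_eq_norm_sq]
  simp only [inner_add_add_self, real_inner_smul_left, real_inner_smul_right,
    real_inner_comm a n]
  rw [real_inner_self_eq_norm_sq, real_inner_self_eq_norm_sq]
  ring

lemma hasDerivAt_phi (n a : E) {u : ℝ} (hu : n + u • a ≠ 0) :
    HasDerivAt (fun v : ℝ => ‖n + v • a‖) ((⟪n, a⟫_ℝ + u * ‖a‖ ^ 2) / ‖n + u • a‖) u := by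
  have hQ : ∀ v : ℝ, ‖n + v • a‖ = Real.sqrt (‖n‖ ^ 2 + 2 * v * ⟪n, a⟫_ℝ + v ^ 2 * ‖a‖ ^ 2) := by
    intro v
    rw [← norm_nta_sq, Real.sqrt_sq (norm_nonneg _)]
  have hQpos : (0:ℝ) < ‖n‖ ^ 2 + 2 * u * ⟪n, a⟫_ℝ + u ^ 2 * ‖a‖ ^ 2 := by
    rw [← norm_nta_sq]
    exact pow_pos (norm_pos_iff.mpr hu) 2
  have hpoly : HasDerivAt (fun v : ℝ => ‖n‖ ^ 2 + 2 * v * ⟪n, a⟫_ℝ + v ^ 2 * ‖a‖ ^ 2)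
      (2 * ⟪n, a⟫_ℝ + 2 * u * ‖a‖ ^ 2) u := by
    have h1 : HasDerivAt (fun v : ℝ => ‖n‖ ^ 2 + 2 * v * ⟪n, a⟫_ℝ + v ^ 2 * ‖a‖ ^ 2)
        (0 + 2 * ⟪n, a⟫_ℝ + 2 * u ^ 1 * ‖a‖ ^ 2) u := by
      refine (hasDerivAt_const u _).add ?_ |>.add ?_
      · simpa using ((hasDerivAt_id u).const_mul (2:ℝ)).mul_const (⟪n, a⟫_ℝ)
      · simpa using ((hasDerivAt_pow 2 u)).mul_const (‖a‖ ^ 2)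
    simpa using h1
  have hsqrt := (hpoly.sqrt (ne_of_gt hQpos))
  have : HasDerivAt (fun v : ℝ => ‖n + v • a‖)
      ((2 * ⟪n, a⟫_ℝ + 2 * u * ‖a‖ ^ 2) / (2 * Real.sqrt (‖n‖ ^ 2 + 2 * u * ⟪n, a⟫_ℝ + u ^ 2 * ‖a‖ ^ 2))) u := by
    refine HasDerivAt.congr_of_eventuallyEq hsqrt (Eventually.of_forall fun v => (hQ v)) 
  rw [← hQ u] at this
  convert this using 1
  have hpos : (0:ℝ) < ‖n + u • a‖ := norm_pos_iff.mpr hu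
  field_simp
end Dlemmas

section Dlemmas2
variable {E : Type*} [NormedAddCommGroup E] [InnerProductSpace ℝ E]

lemma Dp_zero (n a : E) (hn : ‖n‖ = 1) : Dp n a 0 = ⟪n, a⟫_ℝ := by
  have hn0 : n ≠ 0 := by intro h; rw [h] at hn; simp at hn
  simp [Dp, hn0, hn]

lemma Dm_zero (n a : E) (hn : ‖n‖ = 1) : Dm n a 0 = ⟪n, a⟫_ℝ := by
  have hn0 : n ≠ 0 := by intro h; rw [h] at hn; simp at hn
  simp [Dm, hn0, hn]

lemma abs_Dp_le (n a : E) (t : ℝ) : |Dp n a t| ≤ ‖a‖ := by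
  rw [Dp]; split_ifs with h
  · simp
  · rw [← inner_nta, abs_div, abs_norm, div_le_iff₀ (norm_pos_iff.mpr h)]
    rw [mul_comm]
    exact abs_real_inner_le_norm _ _

lemma abs_Dm_le (n a : E) (t : ℝ) : |Dm n a t| ≤ ‖a‖ := by
  rw [Dm]; split_ifs with h
  · simp
  · rw [← inner_nta, abs_div, abs_norm, div_le_iff₀ (norm_pos_iff.mpr h)]
    rw [mul_comm]
    exact abs_real_inner_le_norm _ _

lemma tendsto_slope_right (n a : E) (t : ℝ) :
    Tendsto (slope (fun u : ℝ => ‖n + u • a‖) t) (𝓝[>] t) (𝓝 (Dp n a t)) := by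
  by_cases h : n + t • a = 0
  · have hne : n = -(t • a) := eq_neg_of_add_eq_zero_left h
    have hφ : ∀ u : ℝ, ‖n + u • a‖ = |u - t| * ‖a‖ := by
      intro u
      have : n + u • a = (u - t) • a := by rw [sub_smul, hne]; abel
      rw [this, norm_smul, Real.norm_eq_abs]
    rw [Dp, if_pos h]
    refine Tendsto.congr' ?_ (tendsto_const_nhds (α := ℝ))
    filter_upwards [self_mem_nhdsWithin] with u hu
    have hut : t < u := hu
    rw [slope_def_field, hφ, hφ]
    rw [abs_of_pos (by linarith : (0:ℝ) < u - t)]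
    rw [eq_comm, div_eq_iff (by linarith : u - t ≠ 0)]
    simp only [sub_self, abs_zero, mul_zero, sub_zero]
    ring
  · rw [Dp, if_neg h]
    have := hasDerivAt_iff_tendsto_slope.mp (hasDerivAt_phi n a h)
    exact this.mono_left (nhdsWithin_mono t fun u hu => ne_of_gt hu)

lemma tendsto_slope_left (n a : E) (t : ℝ) :
    Tendsto (slope (fun u : ℝ => ‖n + u • a‖) t) (𝓝[<] t) (𝓝 (Dm n a t)) := by
  by_cases h : n + t • a = 0
  · have hne : n = -(t • a) := eq_neg_of_add_eq_zero_left h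
    have hφ : ∀ u : ℝ, ‖n + u • a‖ = |u - t| * ‖a‖ := by
      intro u
      have : n + u • a = (u - t) • a := by rw [sub_smul, hne]; abel
      rw [this, norm_smul, Real.norm_eq_abs]
    rw [Dm, if_pos h]
    refine Tendsto.congr' ?_ (tendsto_const_nhds (α := ℝ))
    filter_upwards [self_mem_nhdsWithin] with u hu
    have hut : u < t := hu
    rw [slope_def_field, hφ, hφ]
    rw [abs_of_neg (by linarith : u - t < (0:ℝ))]
    rw [eq_comm, div_eq_iff (by intro hc; rw [sub_eq_zero] at hc; exact absurd hc (ne_of_lt hut) : u - t ≠ 0)]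
    simp only [sub_self, abs_zero, mul_zero, sub_zero]
    ring
  · rw [Dm, if_neg h]
    have := hasDerivAt_iff_tendsto_slope.mp (hasDerivAt_phi n a h)
    exact this.mono_left (nhdsWithin_mono t fun u hu => ne_of_lt hu)

lemma tendsto_quot_Dp (n a : E) (hn : ‖n‖ = 1) :
    Tendsto (fun t : ℝ => (Dp n a t - ⟪n, a⟫_ℝ) / t) (𝓝[≠] 0)
      (𝓝 (‖a‖ ^ 2 - ⟪n, a⟫_ℝ ^ 2)) ∧
    Tendsto (fun t : ℝ => (Dm n a t - ⟪n, a⟫_ℝ) / t) (𝓝[≠] 0)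
      (𝓝 (‖a‖ ^ 2 - ⟪n, a⟫_ℝ ^ 2)) := by
  have hn0 : n ≠ 0 := by intro h; rw [h] at hn; simp at hn
  set ψ : ℝ → ℝ := fun t => (⟪n, a⟫_ℝ + t * ‖a‖ ^ 2) / ‖n + t • a‖ with hψdef
  have hψ0 : ψ 0 = ⟪n, a⟫_ℝ := by simp [hψdef, hn]
  have hnum : HasDerivAt (fun t : ℝ => ⟪n, a⟫_ℝ + t * ‖a‖ ^ 2) (‖a‖ ^ 2) 0 := by
    simpa using ((hasDerivAt_id (0:ℝ)).mul_const (‖a‖ ^ 2))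
  have hden : HasDerivAt (fun t : ℝ => ‖n + t • a‖) (⟪n, a⟫_ℝ) 0 := by
    have h0 : n + (0:ℝ) • a ≠ 0 := by simpa using hn0
    have := hasDerivAt_phi n a h0
    simpa [hn] using this
  have hψ : HasDerivAt ψ (‖a‖ ^ 2 - ⟪n, a⟫_ℝ ^ 2) 0 := by
    have h0 : ‖n + (0:ℝ) • a‖ ≠ 0 := by simp [hn]
    have := hnum.div hden h0
    convert this using 1
    case e'_9 =>
      simp [hn]
      ring
    all_goals rfl
  have hslope := hasDerivAt_iff_tendsto_slope.mp hψ
  have hev : ∀ᶠ t in 𝓝[≠] (0:ℝ), n + t • a ≠ 0 := by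
    have hlt : ∀ᶠ t in 𝓝 (0:ℝ), |t| < (‖a‖ + 1)⁻¹ := by
      have : Tendsto (fun t : ℝ => |t|) (𝓝 0) (𝓝 0) := by
        simpa using continuous_abs.tendsto (0:ℝ)
      exact this.eventually_lt_const (by positivity)
    refine eventually_nhdsWithin_of_eventually_nhds (hlt.mono fun t ht => ?_)
    intro hzero
    have h1 : ‖t • a‖ = ‖n‖ := by
      have : t • a = -n := eq_neg_of_add_eq_zero_right hzero
      rw [this, norm_neg]
    rw [norm_smul, Real.norm_eq_abs, hn] at h1
    have h2 : |t| * ‖a‖ < (‖a‖ + 1)⁻¹ * (‖a‖ + 1) := by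
      apply mul_lt_mul'' ht (by linarith [norm_nonneg a]) (abs_nonneg t) (norm_nonneg a) |>.trans_le le_rfl
    rw [inv_mul_cancel₀ (by positivity)] at h2
    rw [h1] at h2
    linarith
  constructor
  · refine Tendsto.congr' ?_ hslope
    filter_upwards [hev, self_mem_nhdsWithin] with t ht ht0
    rw [slope_def_field, hψ0, Dp, if_neg ht]
    simp [hψdef]
  · refine Tendsto.congr' ?_ hslope
    filter_upwards [hev, self_mem_nhdsWithin] with t ht ht0
    rw [slope_def_field, hψ0, Dm, if_neg ht]
    simp [hψdef]

end Dlemmas2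

section Dbounds
variable {E : Type*} [NormedAddCommGroup E] [InnerProductSpace ℝ E]

lemma D_bound_pos (n a : E) (hn : ‖n‖ = 1) {t : ℝ} (ht : 0 < t) :
    ⟪n, a⟫_ℝ ≤ Dp n a t ∧ Dp n a t ≤ ⟪n, a⟫_ℝ + 4 * t * ‖a‖ ^ 2 ∧
    ⟪n, a⟫_ℝ ≤ Dm n a t ∧ Dm n a t ≤ ⟪n, a⟫_ℝ + 4 * t * ‖a‖ ^ 2 := by
  have hm : (0:ℝ) ≤ ‖a‖ := norm_nonneg a
  have hc : |⟪n, a⟫_ℝ| ≤ ‖a‖ := by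
    have := abs_real_inner_le_norm n a
    rwa [hn, one_mul] at this
  by_cases hk : n + t • a = 0
  · have h1 : t * ‖a‖ = 1 := by
      have h2 : ‖t • a‖ = ‖n‖ := by rw [eq_neg_of_add_eq_zero_right hk, norm_neg]
      rwa [norm_smul, Real.norm_eq_abs, abs_of_pos ht, hn] at h2
    have hc' : ⟪n, a⟫_ℝ = -(t * ‖a‖ ^ 2) := by
      have h0 : ⟪n + t • a, a⟫_ℝ = 0 := by rw [hk, inner_zero_left]
      rw [inner_nta] at h0; linarith
    have htm2 : t * ‖a‖ ^ 2 = ‖a‖ := by nlinarith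
    rw [Dp, Dm, if_pos hk, if_pos hk]
    refine ⟨by nlinarith, by nlinarith, by nlinarith, by nlinarith⟩
  · have hr : (0:ℝ) < ‖n + t • a‖ := norm_pos_iff.mpr hk
    have hr1 : |‖n + t • a‖ - 1| ≤ t * ‖a‖ := by
      have h2 := abs_norm_sub_norm_le (n + t • a) n
      have h3 : n + t • a - n = t • a := by abel
      rw [h3, norm_smul, Real.norm_eq_abs, abs_of_pos ht, hn] at h2
      exact h2
    have habs : ⟪n, a⟫_ℝ * (‖n + t • a‖ - 1) ≤ t * ‖a‖ ^ 2 := by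
      calc ⟪n, a⟫_ℝ * (‖n + t • a‖ - 1) ≤ |⟪n, a⟫_ℝ * (‖n + t • a‖ - 1)| := le_abs_self _
        _ = |⟪n, a⟫_ℝ| * |‖n + t • a‖ - 1| := abs_mul _ _
        _ ≤ ‖a‖ * (t * ‖a‖) := by
            exact mul_le_mul hc hr1 (abs_nonneg _) hm
        _ = t * ‖a‖ ^ 2 := by ring
    have habs' : ⟪n, a⟫_ℝ * (1 - ‖n + t • a‖) ≤ t * ‖a‖ ^ 2 := by
      calc ⟪n, a⟫_ℝ * (1 - ‖n + t • a‖) ≤ |⟪n, a⟫_ℝ * (1 - ‖n + t • a‖)| := le_abs_self _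
        _ = |⟪n, a⟫_ℝ| * |‖n + t • a‖ - 1| := by rw [abs_mul, abs_sub_comm]
        _ ≤ ‖a‖ * (t * ‖a‖) := mul_le_mul hc hr1 (abs_nonneg _) hm
        _ = t * ‖a‖ ^ 2 := by ring
    have hlow : ⟪n, a⟫_ℝ ≤ (⟪n, a⟫_ℝ + t * ‖a‖ ^ 2) / ‖n + t • a‖ := by
      rw [le_div_iff₀ hr]; nlinarith
    have hup : (⟪n, a⟫_ℝ + t * ‖a‖ ^ 2) / ‖n + t • a‖ ≤ ⟪n, a⟫_ℝ + 4 * t * ‖a‖ ^ 2 := by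
      rw [div_le_iff₀ hr]
      by_cases hhalf : (1:ℝ)/2 ≤ ‖n + t • a‖
      · nlinarith [mul_nonneg (mul_nonneg ht.le hm) hm]
      · push_neg at hhalf
        have htm : (1:ℝ)/2 ≤ t * ‖a‖ := by
          have h4 : ‖n‖ ≤ ‖n + t • a‖ + ‖t • a‖ := by
            calc ‖n‖ = ‖(n + t • a) - t • a‖ := by congr 1; abel
              _ ≤ ‖n + t • a‖ + ‖t • a‖ := norm_sub_le _ _
          rw [hn, norm_smul, Real.norm_eq_abs, abs_of_pos ht] at h4
          linarith
        have hD : ⟪n, a⟫_ℝ + t * ‖a‖ ^ 2 ≤ ‖n + t • a‖ * ‖a‖ := by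
          rw [← inner_nta]; exact real_inner_le_norm _ _
        have h5 : ‖a‖ ≤ ⟪n, a⟫_ℝ + 4 * t * ‖a‖ ^ 2 := by
          have h8 : (1/2) * ‖a‖ ≤ t * ‖a‖ * ‖a‖ := mul_le_mul_of_nonneg_right htm hm
          have h9 := (abs_le.mp hc).1
          nlinarith
        calc ⟪n, a⟫_ℝ + t * ‖a‖ ^ 2 ≤ ‖n + t • a‖ * ‖a‖ := hD
          _ ≤ ‖n + t • a‖ * (⟪n, a⟫_ℝ + 4 * t * ‖a‖ ^ 2) := by
              have h6 : 0 ≤ ‖a‖ := hm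
              have h7 : (0:ℝ) ≤ ‖n + t • a‖ := hr.le
              nlinarith
          _ = (⟪n, a⟫_ℝ + 4 * t * ‖a‖ ^ 2) * ‖n + t • a‖ := by ring
    rw [Dp, Dm, if_neg hk, if_neg hk]
    exact ⟨hlow, hup, hlow, hup⟩

lemma Dp_neg_eq (n a : E) (t : ℝ) : Dp n a t = -(Dm n (-a) (-t)) := by
  have hcond : n + (-t) • (-a) = n + t • a := by rw [smul_neg, neg_smul, neg_neg]
  simp only [Dp, Dm, hcond]
  split_ifs with h
  · rw [norm_neg, neg_neg]
  · rw [inner_neg_right, norm_neg, ← neg_div]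
    congr 1
    ring

lemma Dm_neg_eq (n a : E) (t : ℝ) : Dm n a t = -(Dp n (-a) (-t)) := by
  have hcond : n + (-t) • (-a) = n + t • a := by rw [smul_neg, neg_smul, neg_neg]
  simp only [Dp, Dm, hcond]
  split_ifs with h
  · rw [norm_neg]
  · rw [inner_neg_right, norm_neg, ← neg_div]
    congr 1
    ring

private lemma quot01 {c y t m2 : ℝ} (ht : 0 < t) (h1 : c ≤ y) (h2 : y ≤ c + 4 * t * m2) :
    0 ≤ (y - c) / t ∧ (y - c) / t ≤ 4 * m2 :=
  ⟨div_nonneg (by linarith) ht.le, by rw [div_le_iff₀ ht]; linarith⟩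

lemma D_bound (n a : E) (hn : ‖n‖ = 1) {t : ℝ} (ht : t ≠ 0) :
    (0 ≤ (Dp n a t - ⟪n, a⟫_ℝ) / t ∧ (Dp n a t - ⟪n, a⟫_ℝ) / t ≤ 4 * ‖a‖ ^ 2) ∧
    (0 ≤ (Dm n a t - ⟪n, a⟫_ℝ) / t ∧ (Dm n a t - ⟪n, a⟫_ℝ) / t ≤ 4 * ‖a‖ ^ 2) := by
  rcases ht.lt_or_gt with hneg | hpos
  · obtain ⟨l1, u1, l2, u2⟩ := D_bound_pos n (-a) hn (t := -t) (neg_pos.mpr hneg)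
    have hip : ⟪n, -a⟫_ℝ = -⟪n, a⟫_ℝ := inner_neg_right _ _
    rw [hip] at l1 u1 l2 u2
    rw [norm_neg] at u1 u2
    have e1 : (Dp n a t - ⟪n, a⟫_ℝ) / t = (Dm n (-a) (-t) - -⟪n, a⟫_ℝ) / (-t) := by
      rw [Dp_neg_eq n a t, div_neg, ← neg_div]
      congr 1
      ring
    have e2 : (Dm n a t - ⟪n, a⟫_ℝ) / t = (Dp n (-a) (-t) - -⟪n, a⟫_ℝ) / (-t) := by
      rw [Dm_neg_eq n a t, div_neg, ← neg_div]
      congr 1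
      ring
    rw [e1, e2]
    exact ⟨quot01 (neg_pos.mpr hneg) l2 u2, quot01 (neg_pos.mpr hneg) l1 u1⟩
  · obtain ⟨l1, u1, l2, u2⟩ := D_bound_pos n a hn hpos
    exact ⟨quot01 hpos l1 u1, quot01 hpos l2 u2⟩

end Dbounds

lemma shift_Ici {f : ℝ → ℝ} {d t c : ℝ} (hf : HasDerivWithinAt f d (Ici t) t) :
    HasDerivWithinAt (fun e : ℝ => f (e - c)) d (Ici (t + c)) (t + c) := by
  have hg : HasDerivWithinAt (fun e : ℝ => e - c) 1 (Ici (t + c)) (t + c) :=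
    (hasDerivWithinAt_id _ _).sub_const c
  have hf' : HasDerivWithinAt f d (Ici t) ((fun e : ℝ => e - c) (t + c)) := by
    simpa using hf
  have hmaps : MapsTo (fun e : ℝ => e - c) (Ici (t + c)) (Ici t) := by
    intro e he
    simp only [mem_Ici] at *
    linarith
  have := HasDerivWithinAt.comp (t + c) hf' hg hmaps
  simpa [Function.comp_def] using this

lemma shift_Iic {f : ℝ → ℝ} {d t c : ℝ} (hf : HasDerivWithinAt f d (Iic t) t) :
    HasDerivWithinAt (fun e : ℝ => f (e - c)) d (Iic (t + c)) (t + c) := by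
  have hg : HasDerivWithinAt (fun e : ℝ => e - c) 1 (Iic (t + c)) (t + c) :=
    (hasDerivWithinAt_id _ _).sub_const c
  have hf' : HasDerivWithinAt f d (Iic t) ((fun e : ℝ => e - c) (t + c)) := by
    simpa using hf
  have hmaps : MapsTo (fun e : ℝ => e - c) (Iic (t + c)) (Iic t) := by
    intro e he
    simp only [mem_Iic] at *
    linarith
  have := HasDerivWithinAt.comp (t + c) hf' hg hmaps
  simpa [Function.comp_def] using this

set_option maxHeartbeats 1000000 in
theorem second_variation_one_sided
    (X : Type*) [MeasurableSpace X] (k : ℕ)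
    (μtv : ℝ → Measure X) (N A : ℝ → X → EuclideanSpace ℝ (Fin k))
    (νtv : Measure X) (Nν : X → EuclideanSpace ℝ (Fin k))
    (νstv : ℝ → Measure X) (Ns : ℝ → X → EuclideanSpace ℝ (Fin k))
    (hμfin : ∀ ε, IsFiniteMeasure (μtv ε))
    (hνfin : IsFiniteMeasure νtv)
    (hνsfin : ∀ ε, IsFiniteMeasure (νstv ε))
    (hN1 : ∀ ε, ∀ᵐ x ∂(μtv ε), ‖N ε x‖ = 1)
    (hNν1 : ∀ᵐ x ∂νtv, ‖Nν x‖ = 1)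
    (hNs1 : ∀ ε, ∀ᵐ x ∂(νstv ε), ‖Ns ε x‖ = 1)
    (hNint : ∀ ε, Integrable (N ε) (μtv ε))
    (hAint : ∀ ε, Integrable (A ε) (μtv ε))
    (hNνint : Integrable Nν νtv)
    (hNsint : ∀ ε, Integrable (Ns ε) (νstv ε))
    (hsing : ∀ ε, (νstv ε).MutuallySingular (μtv ε))
    (hadd : ∀ ε : ℝ, ∀ S : Set X, MeasurableSet S →
      ∫ x in S, N ε x ∂(μtv ε) = (∫ x in S, N 0 x ∂(μtv 0)) + ε • ∫ x in S, Nν x ∂νtv)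
    (hRN : ∀ ε : ℝ, ∀ S : Set X, MeasurableSet S →
      ∫ x in S, Nν x ∂νtv = (∫ x in S, A ε x ∂(μtv ε)) + ∫ x in S, Ns ε x ∂(νstv ε))
    (Fp Fm : ℝ → ℝ)
    (hFp : ∀ ε : ℝ, HasDerivWithinAt (fun e : ℝ => (μtv e Set.univ).toReal) (Fp ε) (Set.Ici ε) ε)
    (hFm : ∀ ε : ℝ, HasDerivWithinAt (fun e : ℝ => (μtv e Set.univ).toReal) (Fm ε) (Set.Iic ε) ε)
    (ε₁ : ℝ)
    (hA2 : Integrable (fun x => ‖A ε₁ x‖ ^ 2) (μtv ε₁)) :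
    Tendsto (fun ε₂ : ℝ => (Fp ε₂ - Fp ε₁) / (ε₂ - ε₁)) (𝓝[>] ε₁)
      (𝓝 (∫ x, (‖A ε₁ x‖ ^ 2 - ⟪A ε₁ x, N ε₁ x⟫_ℝ ^ 2) ∂(μtv ε₁))) ∧
    Tendsto (fun ε₂ : ℝ => (Fm ε₂ - Fp ε₁) / (ε₂ - ε₁)) (𝓝[>] ε₁)
      (𝓝 (∫ x, (‖A ε₁ x‖ ^ 2 - ⟪A ε₁ x, N ε₁ x⟫_ℝ ^ 2) ∂(μtv ε₁))) ∧
    Tendsto (fun ε₂ : ℝ => (Fp ε₂ - Fm ε₁) / (ε₂ - ε₁)) (𝓝[<] ε₁)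
      (𝓝 (∫ x, (‖A ε₁ x‖ ^ 2 - ⟪A ε₁ x, N ε₁ x⟫_ℝ ^ 2) ∂(μtv ε₁))) ∧
    Tendsto (fun ε₂ : ℝ => (Fm ε₂ - Fm ε₁) / (ε₂ - ε₁)) (𝓝[<] ε₁)
      (𝓝 (∫ x, (‖A ε₁ x‖ ^ 2 - ⟪A ε₁ x, N ε₁ x⟫_ℝ ^ 2) ∂(μtv ε₁))) ∧
    0 ≤ ∫ x, (‖A ε₁ x‖ ^ 2 - ⟪A ε₁ x, N ε₁ x⟫_ℝ ^ 2) ∂(μtv ε₁) := by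
  classical
  haveI := hμfin ε₁
  haveI := hνsfin ε₁
  set L : ℝ := ∫ x, (‖A ε₁ x‖ ^ 2 - ⟪A ε₁ x, N ε₁ x⟫_ℝ ^ 2) ∂(μtv ε₁) with hLdef
  set sν : ℝ := ((νstv ε₁) Set.univ).toReal with hsdef
  set hh : ℝ → ℝ := fun t => ∫ x, ‖N ε₁ x + t • A ε₁ x‖ ∂(μtv ε₁) with hhdef
  set P : ℝ → ℝ := fun t => ∫ x, Dp (N ε₁ x) (A ε₁ x) t ∂(μtv ε₁) with hPdef
  set M : ℝ → ℝ := fun t => ∫ x, Dm (N ε₁ x) (A ε₁ x) t ∂(μtv ε₁) with hMdef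
  -- Step A : representation of the total mass
  have hrep : ∀ e : ℝ, (μtv e Set.univ).toReal = hh (e - ε₁) + |e - ε₁| * sν := by
    intro e
    haveI := hμfin e
    obtain ⟨sE, hsE, hνsE, hμE⟩ := hsing ε₁
    set t : ℝ := e - ε₁ with htdef
    set g : X → EuclideanSpace ℝ (Fin k) :=
      fun x => if x ∈ sE then N ε₁ x + t • A ε₁ x else t • Ns ε₁ x with hgdef
    have hμs : ∀ᵐ x ∂(μtv ε₁), x ∈ sE := by
      rw [ae_iff]
      convert hμE using 2
      rfl
    have hνss : ∀ᵐ x ∂(νstv ε₁), x ∉ sE := by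
      rw [ae_iff]
      simp only [not_not]
      exact hνsE
    have hgμ : g =ᵐ[μtv ε₁] fun x => N ε₁ x + t • A ε₁ x :=
      hμs.mono fun x hx => by simp only [hgdef, if_pos hx]
    have hgνs : g =ᵐ[νstv ε₁] fun x => t • Ns ε₁ x :=
      hνss.mono fun x hx => by simp only [hgdef, if_neg hx]
    have hint1 : Integrable (fun x => N ε₁ x + t • A ε₁ x) (μtv ε₁) :=
      (hNint ε₁).add ((hAint ε₁).smul t)
    have hint2 : Integrable (fun x => t • Ns ε₁ x) (νstv ε₁) := (hNsint ε₁).smul t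
    have hgint1 : Integrable g (μtv ε₁) := hint1.congr hgμ.symm
    have hgint2 : Integrable g (νstv ε₁) := hint2.congr hgνs.symm
    have hgint : Integrable g (μtv ε₁ + νstv ε₁) := integrable_add_measure.mpr ⟨hgint1, hgint2⟩
    have heq : ∀ S, MeasurableSet S →
        ∫ x in S, N e x ∂(μtv e) = ∫ x in S, g x ∂(μtv ε₁ + νstv ε₁) := by
      intro S hS
      have e0 : ∫ x in S, g x ∂(μtv ε₁ + νstv ε₁)
          = (∫ x in S, (N ε₁ x + t • A ε₁ x) ∂(μtv ε₁)) + ∫ x in S, t • Ns ε₁ x ∂(νstv ε₁) := by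
        rw [Measure.restrict_add, integral_add_measure hgint1.integrableOn hgint2.integrableOn]
        congr 1
        · exact integral_congr_ae (ae_restrict_of_ae hgμ)
        · exact integral_congr_ae (ae_restrict_of_ae hgνs)
      have e1 : ∫ x in S, (N ε₁ x + t • A ε₁ x) ∂(μtv ε₁)
          = (∫ x in S, N ε₁ x ∂(μtv ε₁)) + t • ∫ x in S, A ε₁ x ∂(μtv ε₁) := by
        have hintA : Integrable (fun x => t • A ε₁ x) (μtv ε₁) := (hAint ε₁).smul t
        rw [integral_add (hNint ε₁).integrableOn hintA.integrableOn, integral_smul]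
      have e2 := hRN ε₁ S hS
      have e3 : (∫ x in S, N 0 x ∂(μtv 0))
          = (∫ x in S, N ε₁ x ∂(μtv ε₁)) - ε₁ • ∫ x in S, Nν x ∂νtv := by
        rw [hadd ε₁ S hS]; abel
      have e4 := hadd e S hS
      have e5 : ∫ x in S, t • Ns ε₁ x ∂(νstv ε₁) = t • ∫ x in S, Ns ε₁ x ∂(νstv ε₁) :=
        integral_smul t _
      rw [e4, e0, e1, e5, e3, e2, htdef]
      module
    have htv := tv_eq (μtv e) (μtv ε₁ + νstv ε₁) (N e) g (hNint e) hgint (hN1 e) heq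
    rw [htv, integral_add_measure hgint1.norm hgint2.norm]
    congr 1
    · exact integral_congr_ae (hgμ.fun_comp norm)
    · have e6 : (fun x => ‖g x‖) =ᵐ[νstv ε₁] fun x => |t| * ‖Ns ε₁ x‖ :=
        hgνs.mono fun x hx => by simp only [hx, norm_smul, Real.norm_eq_abs]
      rw [integral_congr_ae e6, integral_const_mul]
      congr 1
      have e7 : (fun x => ‖Ns ε₁ x‖) =ᵐ[νstv ε₁] fun _ => (1:ℝ) :=
        (hNs1 ε₁).mono fun x hx => hx
      rw [integral_congr_ae e7]
      simp [hsdef]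
      rfl
  -- measurability and integrability of the derivative integrands
  have hNm := (hNint ε₁).1
  have hAm := (hAint ε₁).1
  have haeNA : ∀ᵐ x ∂(μtv ε₁), N ε₁ x = hNm.mk (N ε₁) x ∧ A ε₁ x = hAm.mk (A ε₁) x :=
    hNm.ae_eq_mk.and hAm.ae_eq_mk
  have hn' : Measurable (hNm.mk (N ε₁)) := hNm.stronglyMeasurable_mk.measurable
  have ha' : Measurable (hAm.mk (A ε₁)) := hAm.stronglyMeasurable_mk.measurable
  have hDpm : ∀ t : ℝ, AEStronglyMeasurable (fun x => Dp (N ε₁ x) (A ε₁ x) t) (μtv ε₁) := by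
    intro t
    have hv : Measurable fun x => hNm.mk (N ε₁) x + t • hAm.mk (A ε₁) x :=
      hn'.add (ha'.const_smul t)
    have hcond : MeasurableSet {x | hNm.mk (N ε₁) x + t • hAm.mk (A ε₁) x = 0} := by
      have : {x | hNm.mk (N ε₁) x + t • hAm.mk (A ε₁) x = 0}
          = (fun x => ‖hNm.mk (N ε₁) x + t • hAm.mk (A ε₁) x‖) ⁻¹' {0} := by
        ext x; simp [norm_eq_zero]
      rw [this]
      exact hv.norm (measurableSet_singleton 0)
    have hmeas : Measurable fun x => Dp (hNm.mk (N ε₁) x) (hAm.mk (A ε₁) x) t := by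
      unfold Dp
      refine Measurable.ite hcond ha'.norm ?_
      exact ((hn'.inner ha').add ((measurable_const.mul (ha'.norm.pow measurable_const)))).div
        hv.norm
    exact hmeas.aestronglyMeasurable.congr (haeNA.mono fun x hx => by simp only [hx.1, hx.2])
  have hDmm : ∀ t : ℝ, AEStronglyMeasurable (fun x => Dm (N ε₁ x) (A ε₁ x) t) (μtv ε₁) := by
    intro t
    have hv : Measurable fun x => hNm.mk (N ε₁) x + t • hAm.mk (A ε₁) x :=
      hn'.add (ha'.const_smul t)
    have hcond : MeasurableSet {x | hNm.mk (N ε₁) x + t • hAm.mk (A ε₁) x = 0} := by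
      have : {x | hNm.mk (N ε₁) x + t • hAm.mk (A ε₁) x = 0}
          = (fun x => ‖hNm.mk (N ε₁) x + t • hAm.mk (A ε₁) x‖) ⁻¹' {0} := by
        ext x; simp [norm_eq_zero]
      rw [this]
      exact hv.norm (measurableSet_singleton 0)
    have hmeas : Measurable fun x => Dm (hNm.mk (N ε₁) x) (hAm.mk (A ε₁) x) t := by
      unfold Dm
      refine Measurable.ite hcond ha'.norm.neg ?_
      exact ((hn'.inner ha').add ((measurable_const.mul (ha'.norm.pow measurable_const)))).div
        hv.norm
    exact hmeas.aestronglyMeasurable.congr (haeNA.mono fun x hx => by simp only [hx.1, hx.2])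
  have hDpint : ∀ t : ℝ, Integrable (fun x => Dp (N ε₁ x) (A ε₁ x) t) (μtv ε₁) := fun t =>
    Integrable.mono' (hAint ε₁).norm (hDpm t)
      (Eventually.of_forall fun x => by
        simpa [Real.norm_eq_abs] using abs_Dp_le (N ε₁ x) (A ε₁ x) t)
  have hDmint : ∀ t : ℝ, Integrable (fun x => Dm (N ε₁ x) (A ε₁ x) t) (μtv ε₁) := fun t =>
    Integrable.mono' (hAint ε₁).norm (hDmm t)
      (Eventually.of_forall fun x => by
        simpa [Real.norm_eq_abs] using abs_Dm_le (N ε₁ x) (A ε₁ x) t)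
  have hφint : ∀ u : ℝ, Integrable (fun x => ‖N ε₁ x + u • A ε₁ x‖) (μtv ε₁) := fun u =>
    ((hNint ε₁).add ((hAint ε₁).smul u)).norm
  -- one-sided derivatives of hh
  have hslope_bound : ∀ u t : ℝ, u ≠ t → ∀ x : X,
      ‖(‖N ε₁ x + u • A ε₁ x‖ - ‖N ε₁ x + t • A ε₁ x‖) / (u - t)‖ ≤ ‖A ε₁ x‖ := by
    intro u t hut x
    have h1 := abs_norm_sub_norm_le (N ε₁ x + u • A ε₁ x) (N ε₁ x + t • A ε₁ x)
    have h2 : (N ε₁ x + u • A ε₁ x) - (N ε₁ x + t • A ε₁ x) = (u - t) • A ε₁ x := by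
      rw [sub_smul]; abel
    rw [h2, norm_smul, Real.norm_eq_abs] at h1
    rw [Real.norm_eq_abs, abs_div]
    rw [div_le_iff₀ (abs_pos.mpr (sub_ne_zero.mpr hut))]
    calc |‖N ε₁ x + u • A ε₁ x‖ - ‖N ε₁ x + t • A ε₁ x‖| ≤ |u - t| * ‖A ε₁ x‖ := h1
      _ = ‖A ε₁ x‖ * |u - t| := mul_comm _ _
  have hhp : ∀ t : ℝ, HasDerivWithinAt hh (P t) (Ici t) t := by
    intro t
    rw [hasDerivWithinAt_iff_tendsto_slope, Ici_sdiff_left]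
    have hdct := tendsto_integral_filter_of_dominated_convergence (μ := μtv ε₁)
      (l := 𝓝[>] t)
      (F := fun (u : ℝ) (x : X) =>
        (‖N ε₁ x + u • A ε₁ x‖ - ‖N ε₁ x + t • A ε₁ x‖) / (u - t))
      (f := fun x => Dp (N ε₁ x) (A ε₁ x) t) (bound := fun x => ‖A ε₁ x‖)
      (Eventually.of_forall fun u => (((hφint u).aemeasurable.sub (hφint t).aemeasurable).div_const _).aestronglyMeasurable)
      (by
        filter_upwards [self_mem_nhdsWithin] with u hu
        exact Eventually.of_forall fun x => hslope_bound u t (ne_of_gt hu) x)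
      (hAint ε₁).norm
      (Eventually.of_forall fun x => by
        have h0 := tendsto_slope_right (N ε₁ x) (A ε₁ x) t
        refine Tendsto.congr (fun u => ?_) h0
        rw [slope_def_field])
    refine Tendsto.congr' ?_ hdct
    filter_upwards [self_mem_nhdsWithin] with u hu
    have hut : u - t ≠ 0 := sub_ne_zero.mpr (ne_of_gt hu)
    show (∫ x, (‖N ε₁ x + u • A ε₁ x‖ - ‖N ε₁ x + t • A ε₁ x‖) / (u - t) ∂(μtv ε₁))
      = slope hh t u
    rw [slope_def_field, hhdef, integral_div, integral_sub (hφint u) (hφint t)]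
  have hhm : ∀ t : ℝ, HasDerivWithinAt hh (M t) (Iic t) t := by
    intro t
    rw [hasDerivWithinAt_iff_tendsto_slope, Iic_sdiff_right]
    have hdct := tendsto_integral_filter_of_dominated_convergence (μ := μtv ε₁)
      (l := 𝓝[<] t)
      (F := fun (u : ℝ) (x : X) =>
        (‖N ε₁ x + u • A ε₁ x‖ - ‖N ε₁ x + t • A ε₁ x‖) / (u - t))
      (f := fun x => Dm (N ε₁ x) (A ε₁ x) t) (bound := fun x => ‖A ε₁ x‖)
      (Eventually.of_forall fun u => (((hφint u).aemeasurable.sub (hφint t).aemeasurable).div_const _).aestronglyMeasurable)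
      (by
        filter_upwards [self_mem_nhdsWithin] with u hu
        exact Eventually.of_forall fun x => hslope_bound u t (ne_of_lt hu) x)
      (hAint ε₁).norm
      (Eventually.of_forall fun x => by
        have h0 := tendsto_slope_left (N ε₁ x) (A ε₁ x) t
        refine Tendsto.congr (fun u => ?_) h0
        rw [slope_def_field])
    refine Tendsto.congr' ?_ hdct
    filter_upwards [self_mem_nhdsWithin] with u hu
    have hut : u - t ≠ 0 := sub_ne_zero.mpr (ne_of_lt hu)
    show (∫ x, (‖N ε₁ x + u • A ε₁ x‖ - ‖N ε₁ x + t • A ε₁ x‖) / (u - t) ∂(μtv ε₁))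
      = slope hh t u
    rw [slope_def_field, hhdef, integral_div, integral_sub (hφint u) (hφint t)]
    -- identification of the one-sided derivatives
  have hFpEq : ∀ t : ℝ, 0 ≤ t → Fp (ε₁ + t) = P t + sν := by
    intro t ht
    have h1 : HasDerivWithinAt (fun e : ℝ => hh (e - ε₁)) (P t) (Ici (ε₁ + t)) (ε₁ + t) := by
      have h0 := shift_Ici (c := ε₁) (hhp t)
      rwa [add_comm t ε₁] at h0
    have h2 : HasDerivWithinAt (fun e : ℝ => (e - ε₁) * sν) sν (Ici (ε₁ + t)) (ε₁ + t) := by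
      simpa using ((hasDerivWithinAt_id (ε₁ + t) (Ici (ε₁ + t))).sub_const ε₁).mul_const sν
    have hG := h1.add h2
    have hF : HasDerivWithinAt (fun e : ℝ => (μtv e Set.univ).toReal) (P t + sν)
        (Ici (ε₁ + t)) (ε₁ + t) := by
      refine HasDerivWithinAt.congr_of_eventuallyEq hG ?_ ?_
      · filter_upwards [self_mem_nhdsWithin] with e he
        have he' : ε₁ + t ≤ e := mem_Ici.mp he
        rw [hrep e, abs_of_nonneg (by linarith : (0:ℝ) ≤ e - ε₁), Pi.add_apply]
      · rw [hrep (ε₁ + t), abs_of_nonneg (by linarith : (0:ℝ) ≤ ε₁ + t - ε₁), Pi.add_apply]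
    have u1 := (hFp (ε₁ + t)).derivWithin (uniqueDiffOn_Ici (ε₁ + t) (ε₁ + t) self_mem_Ici)
    have u2 := hF.derivWithin (uniqueDiffOn_Ici (ε₁ + t) (ε₁ + t) self_mem_Ici)
    rw [← u1, u2]
  have hFpEqNeg : ∀ t : ℝ, t < 0 → Fp (ε₁ + t) = P t - sν := by
    intro t ht
    have h1 : HasDerivWithinAt (fun e : ℝ => hh (e - ε₁)) (P t) (Ici (ε₁ + t)) (ε₁ + t) := by
      have h0 := shift_Ici (c := ε₁) (hhp t)
      rwa [add_comm t ε₁] at h0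
    have h2 : HasDerivWithinAt (fun e : ℝ => (e - ε₁) * sν) sν (Ici (ε₁ + t)) (ε₁ + t) := by
      simpa using ((hasDerivWithinAt_id (ε₁ + t) (Ici (ε₁ + t))).sub_const ε₁).mul_const sν
    have hG := h1.sub h2
    have hF : HasDerivWithinAt (fun e : ℝ => (μtv e Set.univ).toReal) (P t - sν)
        (Ici (ε₁ + t)) (ε₁ + t) := by
      refine HasDerivWithinAt.congr_of_eventuallyEq hG ?_ ?_
      · filter_upwards [eventually_nhdsWithin_of_eventually_nhds
          (isOpen_Iio.eventually_mem (show ε₁ + t ∈ Iio ε₁ by simp [mem_Iio]; linarith))]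
          with e he
        have he' : e < ε₁ := mem_Iio.mp he
        rw [hrep e, abs_of_nonpos (by linarith : e - ε₁ ≤ (0:ℝ)), Pi.sub_apply]
        ring
      · rw [hrep (ε₁ + t), abs_of_nonpos (by linarith : ε₁ + t - ε₁ ≤ (0:ℝ)), Pi.sub_apply]
        ring
    have u1 := (hFp (ε₁ + t)).derivWithin (uniqueDiffOn_Ici (ε₁ + t) (ε₁ + t) self_mem_Ici)
    have u2 := hF.derivWithin (uniqueDiffOn_Ici (ε₁ + t) (ε₁ + t) self_mem_Ici)
    rw [← u1, u2]
  have hFmEqPos : ∀ t : ℝ, 0 < t → Fm (ε₁ + t) = M t + sν := by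
    intro t ht
    have h1 : HasDerivWithinAt (fun e : ℝ => hh (e - ε₁)) (M t) (Iic (ε₁ + t)) (ε₁ + t) := by
      have h0 := shift_Iic (c := ε₁) (hhm t)
      rwa [add_comm t ε₁] at h0
    have h2 : HasDerivWithinAt (fun e : ℝ => (e - ε₁) * sν) sν (Iic (ε₁ + t)) (ε₁ + t) := by
      simpa using ((hasDerivWithinAt_id (ε₁ + t) (Iic (ε₁ + t))).sub_const ε₁).mul_const sν
    have hG := h1.add h2
    have hF : HasDerivWithinAt (fun e : ℝ => (μtv e Set.univ).toReal) (M t + sν)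
        (Iic (ε₁ + t)) (ε₁ + t) := by
      refine HasDerivWithinAt.congr_of_eventuallyEq hG ?_ ?_
      · filter_upwards [eventually_nhdsWithin_of_eventually_nhds
          (isOpen_Ioi.eventually_mem (show ε₁ + t ∈ Ioi ε₁ by simp [mem_Ioi]; linarith))]
          with e he
        have he' : ε₁ < e := mem_Ioi.mp he
        rw [hrep e, abs_of_nonneg (by linarith : (0:ℝ) ≤ e - ε₁), Pi.add_apply]
      · rw [hrep (ε₁ + t), abs_of_nonneg (by linarith : (0:ℝ) ≤ ε₁ + t - ε₁), Pi.add_apply]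
    have u1 := (hFm (ε₁ + t)).derivWithin (uniqueDiffOn_Iic (ε₁ + t) (ε₁ + t) self_mem_Iic)
    have u2 := hF.derivWithin (uniqueDiffOn_Iic (ε₁ + t) (ε₁ + t) self_mem_Iic)
    rw [← u1, u2]
  have hFmEq : ∀ t : ℝ, t ≤ 0 → Fm (ε₁ + t) = M t - sν := by
    intro t ht
    have h1 : HasDerivWithinAt (fun e : ℝ => hh (e - ε₁)) (M t) (Iic (ε₁ + t)) (ε₁ + t) := by
      have h0 := shift_Iic (c := ε₁) (hhm t)
      rwa [add_comm t ε₁] at h0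
    have h2 : HasDerivWithinAt (fun e : ℝ => (e - ε₁) * sν) sν (Iic (ε₁ + t)) (ε₁ + t) := by
      simpa using ((hasDerivWithinAt_id (ε₁ + t) (Iic (ε₁ + t))).sub_const ε₁).mul_const sν
    have hG := h1.sub h2
    have hF : HasDerivWithinAt (fun e : ℝ => (μtv e Set.univ).toReal) (M t - sν)
        (Iic (ε₁ + t)) (ε₁ + t) := by
      refine HasDerivWithinAt.congr_of_eventuallyEq hG ?_ ?_
      · filter_upwards [self_mem_nhdsWithin] with e he
        have he' : e ≤ ε₁ + t := mem_Iic.mp he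
        rw [hrep e, abs_of_nonpos (by linarith : e - ε₁ ≤ (0:ℝ)), Pi.sub_apply]
        ring
      · rw [hrep (ε₁ + t), abs_of_nonpos (by linarith : ε₁ + t - ε₁ ≤ (0:ℝ)), Pi.sub_apply]
        ring
    have u1 := (hFm (ε₁ + t)).derivWithin (uniqueDiffOn_Iic (ε₁ + t) (ε₁ + t) self_mem_Iic)
    have u2 := hF.derivWithin (uniqueDiffOn_Iic (ε₁ + t) (ε₁ + t) self_mem_Iic)
    rw [← u1, u2]
  have hM0P0 : M 0 = P 0 := by
    simp only [hMdef, hPdef]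
    exact integral_congr_ae ((hN1 ε₁).mono fun x hx => by
      simp only [Dm_zero (N ε₁ x) (A ε₁ x) hx, Dp_zero (N ε₁ x) (A ε₁ x) hx])
  -- the second-order limits
  have hmain : ∀ l : Filter ℝ, l.IsCountablyGenerated → l ≤ 𝓝[≠] (0:ℝ) →
      Tendsto (fun u : ℝ => (P u - P 0) / u) l (𝓝 L) ∧
      Tendsto (fun u : ℝ => (M u - M 0) / u) l (𝓝 L) := by
    intro l hcg hle
    haveI := hcg
    have hne : ∀ᶠ u : ℝ in l, u ≠ 0 := hle self_mem_nhdsWithin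
    constructor
    · have hdct := tendsto_integral_filter_of_dominated_convergence (μ := μtv ε₁) (l := l)
        (F := fun (u : ℝ) (x : X) => (Dp (N ε₁ x) (A ε₁ x) u - Dp (N ε₁ x) (A ε₁ x) 0) / u)
        (f := fun x => ‖A ε₁ x‖ ^ 2 - ⟪A ε₁ x, N ε₁ x⟫_ℝ ^ 2)
        (bound := fun x => 4 * ‖A ε₁ x‖ ^ 2)
        (Eventually.of_forall fun u =>
          (((hDpint u).aemeasurable.sub (hDpint 0).aemeasurable).div_const _).aestronglyMeasurable)
        (by
          filter_upwards [hne] with u hu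
          filter_upwards [hN1 ε₁] with x hx
          have hb := (D_bound (N ε₁ x) (A ε₁ x) hx hu).1
          rw [Dp_zero _ _ hx, Real.norm_eq_abs, abs_of_nonneg hb.1]
          exact hb.2)
        (hA2.const_mul 4)
        ((hN1 ε₁).mono fun x hx => by
          have h0 := ((tendsto_quot_Dp (N ε₁ x) (A ε₁ x) hx).1).mono_left hle
          simp only [Dp_zero (N ε₁ x) (A ε₁ x) hx]
          simp only [real_inner_comm (A ε₁ x) (N ε₁ x)] at h0 ⊢
          exact h0)
      refine Tendsto.congr' ?_ hdct
      filter_upwards [hne] with u hu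
      simp only [hPdef]
      rw [integral_div, integral_sub (hDpint u) (hDpint 0)]
    · have hdct := tendsto_integral_filter_of_dominated_convergence (μ := μtv ε₁) (l := l)
        (F := fun (u : ℝ) (x : X) => (Dm (N ε₁ x) (A ε₁ x) u - Dm (N ε₁ x) (A ε₁ x) 0) / u)
        (f := fun x => ‖A ε₁ x‖ ^ 2 - ⟪A ε₁ x, N ε₁ x⟫_ℝ ^ 2)
        (bound := fun x => 4 * ‖A ε₁ x‖ ^ 2)
        (Eventually.of_forall fun u =>
          (((hDmint u).aemeasurable.sub (hDmint 0).aemeasurable).div_const _).aestronglyMeasurable)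
        (by
          filter_upwards [hne] with u hu
          filter_upwards [hN1 ε₁] with x hx
          have hb := (D_bound (N ε₁ x) (A ε₁ x) hx hu).2
          rw [Dm_zero _ _ hx, Real.norm_eq_abs, abs_of_nonneg hb.1]
          exact hb.2)
        (hA2.const_mul 4)
        ((hN1 ε₁).mono fun x hx => by
          have h0 := ((tendsto_quot_Dp (N ε₁ x) (A ε₁ x) hx).2).mono_left hle
          simp only [Dm_zero (N ε₁ x) (A ε₁ x) hx]
          simp only [real_inner_comm (A ε₁ x) (N ε₁ x)] at h0 ⊢
          exact h0)
      refine Tendsto.congr' ?_ hdct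
      filter_upwards [hne] with u hu
      simp only [hMdef]
      rw [integral_div, integral_sub (hDmint u) (hDmint 0)]
  have hmapP : Tendsto (fun e : ℝ => e - ε₁) (𝓝[>] ε₁) (𝓝[>] (0:ℝ)) := by
    refine tendsto_nhdsWithin_of_tendsto_nhds_of_eventually_within _ ?_ ?_
    · have h0 : Tendsto (fun e : ℝ => e - ε₁) (𝓝 ε₁) (𝓝 (ε₁ - ε₁)) :=
        (continuous_id.sub continuous_const).tendsto ε₁
      rw [sub_self] at h0
      exact h0.mono_left nhdsWithin_le_nhds
    · filter_upwards [self_mem_nhdsWithin] with e he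
      exact sub_pos.mpr (mem_Ioi.mp he)
  have hmapM : Tendsto (fun e : ℝ => e - ε₁) (𝓝[<] ε₁) (𝓝[<] (0:ℝ)) := by
    refine tendsto_nhdsWithin_of_tendsto_nhds_of_eventually_within _ ?_ ?_
    · have h0 : Tendsto (fun e : ℝ => e - ε₁) (𝓝 ε₁) (𝓝 (ε₁ - ε₁)) :=
        (continuous_id.sub continuous_const).tendsto ε₁
      rw [sub_self] at h0
      exact h0.mono_left nhdsWithin_le_nhds
    · filter_upwards [self_mem_nhdsWithin] with e he
      exact sub_neg.mpr (mem_Iio.mp he)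
  have hlt : (𝓝[>] (0:ℝ)) ≤ 𝓝[≠] (0:ℝ) := nhdsWithin_mono 0 fun u hu => ne_of_gt hu
  have hlt' : (𝓝[<] (0:ℝ)) ≤ 𝓝[≠] (0:ℝ) := nhdsWithin_mono 0 fun u hu => ne_of_lt hu
  obtain ⟨TP, TM⟩ := hmain (𝓝[>] (0:ℝ)) inferInstance hlt
  obtain ⟨TP', TM'⟩ := hmain (𝓝[<] (0:ℝ)) inferInstance hlt'
  have hFp0 : Fp ε₁ = P 0 + sν := by
    have := hFpEq 0 le_rfl
    rwa [add_zero] at this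
  have hFm0 : Fm ε₁ = M 0 - sν := by
    have := hFmEq 0 le_rfl
    rwa [add_zero] at this
  have hnonneg : 0 ≤ L := by
    rw [hLdef]
    refine integral_nonneg_of_ae ((hN1 ε₁).mono fun x hx => ?_)
    have h1 := abs_real_inner_le_norm (A ε₁ x) (N ε₁ x)
    rw [hx, mul_one] at h1
    show (0:ℝ) ≤ ‖A ε₁ x‖ ^ 2 - ⟪A ε₁ x, N ε₁ x⟫_ℝ ^ 2
    nlinarith [sq_abs (⟪A ε₁ x, N ε₁ x⟫_ℝ), abs_nonneg (⟪A ε₁ x, N ε₁ x⟫_ℝ),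
      norm_nonneg (A ε₁ x)]
  refine ⟨?_, ?_, ?_, ?_, hnonneg⟩
  · refine Tendsto.congr' ?_ (TP.comp hmapP)
    filter_upwards [self_mem_nhdsWithin] with e he
    have ht : (0:ℝ) < e - ε₁ := sub_pos.mpr he
    have h1 : Fp e = P (e - ε₁) + sν := by
      have := hFpEq (e - ε₁) ht.le
      rwa [show ε₁ + (e - ε₁) = e by ring] at this
    simp only [Function.comp_apply]
    rw [h1, hFp0]
    ring
  · refine Tendsto.congr' ?_ (TM.comp hmapP)
    filter_upwards [self_mem_nhdsWithin] with e he
    have ht : (0:ℝ) < e - ε₁ := sub_pos.mpr he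
    have h1 : Fm e = M (e - ε₁) + sν := by
      have := hFmEqPos (e - ε₁) ht
      rwa [show ε₁ + (e - ε₁) = e by ring] at this
    simp only [Function.comp_apply]
    rw [h1, hFp0, ← hM0P0]
    ring
  · refine Tendsto.congr' ?_ (TP'.comp hmapM)
    filter_upwards [self_mem_nhdsWithin] with e he
    have ht : e - ε₁ < (0:ℝ) := sub_neg.mpr he
    have h1 : Fp e = P (e - ε₁) - sν := by
      have := hFpEqNeg (e - ε₁) ht
      rwa [show ε₁ + (e - ε₁) = e by ring] at this
    simp only [Function.comp_apply]
    rw [h1, hFm0, ← hM0P0]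
    ring
  · refine Tendsto.congr' ?_ (TM'.comp hmapM)
    filter_upwards [self_mem_nhdsWithin] with e he
    have ht : e - ε₁ < (0:ℝ) := sub_neg.mpr he
    have h1 : Fm e = M (e - ε₁) - sν := by
      have := hFmEq (e - ε₁) ht.le
      rwa [show ε₁ + (e - ε₁) = e by ring] at this
    simp only [Function.comp_apply]
    rw [h1, hFm0]
    ring
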